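/- Let d ≥ 1 and let n₀ > 0, κ̄ > 0, c̄ > 0, α₁ > 0, C₁ > 0 and β₁ ∈ ℝ. Let x be a real symmetric positive definite d×d matrix with ‖x‖ > n₀ + 2, and let f, g be real symmetric positive semidefinite d×d matrices and B a real symmetric d×d matrix satisfying Tr(f)·Tr(g) ≤ α₁‖x‖ and Tr(Bx) ≤ −β₁‖x‖² + C₁. Then (c̄/‖x‖)·( Tr(fg) + Tr(f)Tr(g) + (4c̄κ̄/‖x‖ − 2/‖x‖²)·Tr(f x g x) + Tr(Bx) ) ≤ 2α₁c̄ + C₁c̄/(n₀+2) + (4κ̄α₁c̄² − β₁c̄)·‖x‖. -/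

import Mathlib

open Matrix

lemma psd_diag_nonneg {d : ℕ} {A : Matrix (Fin d) (Fin d) ℝ} (hA : A.PosSemidef) (i : Fin d) :
    0 ≤ A i i := by
  have h := hA.dotProduct_mulVec_nonneg (Pi.single i 1)
  simpa [dotProduct, mulVec, Pi.single_apply] using h

lemma psd_trace_nonneg {d : ℕ} {A : Matrix (Fin d) (Fin d) ℝ} (hA : A.PosSemidef) :
    0 ≤ A.trace :=
  Finset.sum_nonneg fun i _ => psd_diag_nonneg hA i

open scoped MatrixOrder in
lemma psd_trace_mul_nonneg {d : ℕ} {A B : Matrix (Fin d) (Fin d) ℝ}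
    (hA : A.PosSemidef) (hB : B.PosSemidef) : 0 ≤ (A * B).trace := by
  obtain ⟨C, rfl⟩ := CStarAlgebra.nonneg_iff_eq_star_mul_self.mp hA.nonneg
  have hpsd : (C * B * Cᴴ).PosSemidef := hB.mul_mul_conjTranspose_same C
  have heq : (C * B * Cᴴ).trace = (star C * C * B).trace := by
    rw [trace_mul_cycle, star_eq_conjTranspose]
  rw [← heq]
  exact psd_trace_nonneg hpsd

lemma psd_sq_apply_le {d : ℕ} {A : Matrix (Fin d) (Fin d) ℝ} (hA : A.PosSemidef) (i j : Fin d) :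
    A i j ^ 2 ≤ A i i * A j j := by
  have hsym : A j i = A i j := by
    simpa using hA.1.apply i j
  have key : ∀ t : ℝ, 0 ≤ A i i * (t * t) + (A i j + A j i) * t + A j j := by
    intro t
    have h := hA.dotProduct_mulVec_nonneg (Pi.single i t + Pi.single j 1)
    simp only [star_trivial, mulVec_add, dotProduct_add, add_dotProduct] at h
    have e : ∀ (a : Fin d) (r : ℝ) (v : Fin d → ℝ),
        Pi.single a r ⬝ᵥ v = r * v a := by
      intro a r v
      simp [dotProduct, Pi.single_apply]
    have e2 : ∀ (a b : Fin d) (r : ℝ), (A *ᵥ Pi.single b r) a = A a b * r := by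
      intro a b r
      simp [mulVec, dotProduct, Pi.single_apply]
    rw [e, e, e, e, e2, e2, e2, e2] at h
    nlinarith [h]
  have hd := discrim_le_zero key
  rw [discrim, hsym] at hd
  nlinarith [hd]

lemma psd_trace_mul_le {d : ℕ} {A B : Matrix (Fin d) (Fin d) ℝ}
    (hA : A.PosSemidef) (hB : B.PosSemidef) : (A * B).trace ≤ A.trace * B.trace := by
  have hsB : ∀ i k : Fin d, B k i = B i k := by
    intro i k
    simpa using hB.1.apply i k
  have step1 : (A * B).trace = ∑ i, ∑ k, A i k * B i k := by
    simp only [Matrix.trace, Matrix.diag, Matrix.mul_apply]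
    exact Finset.sum_congr rfl fun i _ => Finset.sum_congr rfl fun k _ => by rw [hsB]
  have step2 : ∑ i, ∑ k, A i k * B i k ≤
      ∑ i, ∑ k, (Real.sqrt (A i i) * Real.sqrt (B i i)) *
        (Real.sqrt (A k k) * Real.sqrt (B k k)) := by
    refine Finset.sum_le_sum fun i _ => Finset.sum_le_sum fun k _ => ?_
    have h1 : A i k ^ 2 ≤ A i i * A k k := psd_sq_apply_le hA i k
    have h2 : B i k ^ 2 ≤ B i i * B k k := psd_sq_apply_le hB i k
    have ha1 : |A i k| ≤ Real.sqrt (A i i) * Real.sqrt (A k k) := by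
      rw [← Real.sqrt_mul (psd_diag_nonneg hA i)]
      exact Real.abs_le_sqrt h1
    have ha2 : |B i k| ≤ Real.sqrt (B i i) * Real.sqrt (B k k) := by
      rw [← Real.sqrt_mul (psd_diag_nonneg hB i)]
      exact Real.abs_le_sqrt h2
    calc A i k * B i k ≤ |A i k| * |B i k| := by
          rw [← abs_mul]; exact le_abs_self _
      _ ≤ (Real.sqrt (A i i) * Real.sqrt (A k k)) * (Real.sqrt (B i i) * Real.sqrt (B k k)) :=
          mul_le_mul ha1 ha2 (abs_nonneg _) (by positivity)
      _ = (Real.sqrt (A i i) * Real.sqrt (B i i)) * (Real.sqrt (A k k) * Real.sqrt (B k k)) := by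
          ring
  have step3 : ∑ i, ∑ k, (Real.sqrt (A i i) * Real.sqrt (B i i)) *
        (Real.sqrt (A k k) * Real.sqrt (B k k))
      = (∑ i, Real.sqrt (A i i) * Real.sqrt (B i i)) ^ 2 := by
    rw [sq, Finset.sum_mul_sum]
  have step4 : (∑ i, Real.sqrt (A i i) * Real.sqrt (B i i)) ^ 2 ≤ A.trace * B.trace := by
    apply Finset.sum_sq_le_sum_mul_sum_of_sq_eq_mul
    · exact fun i _ => psd_diag_nonneg hA i
    · exact fun i _ => psd_diag_nonneg hB i
    · intro i _
      rw [mul_pow, Real.sq_sqrt (psd_diag_nonneg hA i), Real.sq_sqrt (psd_diag_nonneg hB i)]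
      rfl
  calc (A * B).trace = ∑ i, ∑ k, A i k * B i k := step1
    _ ≤ _ := step2
    _ = _ := step3
    _ ≤ _ := step4

/-- the estimate on the norm part of the Lyapunov function in the region
`‖x‖ > n₀ + 2`, where `‖x‖ = √Tr(xᵀx)` is the Frobenius norm:
`(c̄/‖x‖)(Tr(fg) + Tr(f)Tr(g) + (4c̄κ̄/‖x‖ - 2/‖x‖²)Tr(fxgx) + Tr(Bx))`
`  ≤ 2α₁c̄ + C₁c̄/(n₀+2) + (4κ̄α₁c̄² - β₁c̄)‖x‖`. -/
theorem stmt13 (d : ℕ) (hd : 1 ≤ d)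
    (n₀ κ cb α₁ C₁ β₁ : ℝ)
    (hn₀ : 0 < n₀) (hκ : 0 < κ) (hcb : 0 < cb) (hα₁ : 0 < α₁) (hC₁ : 0 < C₁)
    (x f g B : Matrix (Fin d) (Fin d) ℝ)
    (hx : x.PosDef) (hxn : n₀ + 2 < Real.sqrt ((xᵀ * x).trace))
    (hf : f.PosSemidef) (hg : g.PosSemidef) (hB : B.IsSymm)
    (hfg : f.trace * g.trace ≤ α₁ * Real.sqrt ((xᵀ * x).trace))
    (hBx : (B * x).trace ≤ -β₁ * Real.sqrt ((xᵀ * x).trace) ^ 2 + C₁) :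
    (cb / Real.sqrt ((xᵀ * x).trace)) *
        ((f * g).trace + f.trace * g.trace
          + (4 * cb * κ / Real.sqrt ((xᵀ * x).trace)
              - 2 / Real.sqrt ((xᵀ * x).trace) ^ 2) * (f * x * g * x).trace
          + (B * x).trace)
      ≤ 2 * α₁ * cb + C₁ * cb / (n₀ + 2)
          + (4 * κ * α₁ * cb ^ 2 - β₁ * cb) * Real.sqrt ((xᵀ * x).trace) := by
  set s := Real.sqrt ((xᵀ * x).trace) with hsdef
  have hxpsd := hx.posSemidef
  have hxH : xᴴ = x := hx.1
  have hxxpsd : (x * x).PosSemidef := by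
    have := hxpsd.pow 2
    rwa [pow_two] at this
  have hxt : xᵀ = x := by
    rw [← Matrix.conjTranspose_eq_transpose_of_trivial, hxH]
  have htr0 : 0 ≤ (xᵀ * x).trace := by
    rw [hxt]; exact psd_trace_nonneg hxxpsd
  have hs0 : 0 < s := lt_trans (by linarith) hxn
  have hsq : s ^ 2 = (x * x).trace := by
    rw [hsdef, Real.sq_sqrt htr0, hxt]
  -- positivity facts
  have hft : 0 ≤ f.trace := psd_trace_nonneg hf
  have hgt : 0 ≤ g.trace := psd_trace_nonneg hg
  -- x f x is PSD
  have hxfx : (x * f * x).PosSemidef := by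
    have := hf.mul_mul_conjTranspose_same x
    rwa [hxH] at this
  -- T = Tr(f x g x) = Tr((x f x) g)
  have hTeq : (f * x * g * x).trace = ((x * f * x) * g).trace := by
    rw [show f * x * g * x = (f * x * g) * x from rfl, trace_mul_comm,
      show x * (f * x * g) = (x * f * x) * g from by simp only [Matrix.mul_assoc]]
  have hT0 : 0 ≤ (f * x * g * x).trace := by
    rw [hTeq]; exact psd_trace_mul_nonneg hxfx hg
  have hxfxtr : (x * f * x).trace ≤ f.trace * (x * x).trace := by
    have h1 : (x * f * x).trace = (f * (x * x)).trace := by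
      rw [trace_mul_cycle]
      exact trace_mul_comm _ _
    rw [h1]
    exact psd_trace_mul_le hf hxxpsd
  have hTle : (f * x * g * x).trace ≤ f.trace * g.trace * s ^ 2 := by
    rw [hTeq, hsq]
    calc ((x * f * x) * g).trace ≤ (x * f * x).trace * g.trace :=
          psd_trace_mul_le hxfx hg
      _ ≤ (f.trace * (x * x).trace) * g.trace := by
          apply mul_le_mul_of_nonneg_right hxfxtr hgt
      _ = f.trace * g.trace * (x * x).trace := by ring
  have hfgle : (f * g).trace ≤ α₁ * s :=
    le_trans (psd_trace_mul_le hf hg) hfg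
  -- coefficient bound on the T term
  have hTterm : (4 * cb * κ / s - 2 / s ^ 2) * (f * x * g * x).trace
      ≤ 4 * cb * κ * α₁ * s ^ 2 := by
    have h1 : (4 * cb * κ / s - 2 / s ^ 2) * (f * x * g * x).trace
        ≤ (4 * cb * κ / s) * (f * x * g * x).trace := by
      apply mul_le_mul_of_nonneg_right _ hT0
      have : 0 ≤ 2 / s ^ 2 := by positivity
      linarith
    have hT3 : (f * x * g * x).trace ≤ α₁ * s ^ 3 := by
      have : f.trace * g.trace * s ^ 2 ≤ (α₁ * s) * s ^ 2 := by
        apply mul_le_mul_of_nonneg_right hfg (by positivity)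
      calc (f * x * g * x).trace ≤ f.trace * g.trace * s ^ 2 := hTle
        _ ≤ (α₁ * s) * s ^ 2 := this
        _ = α₁ * s ^ 3 := by ring
    have h2 : (4 * cb * κ / s) * (f * x * g * x).trace
        ≤ (4 * cb * κ / s) * (α₁ * s ^ 3) := by
      apply mul_le_mul_of_nonneg_left hT3 (by positivity)
    have h3 : (4 * cb * κ / s) * (α₁ * s ^ 3) = 4 * cb * κ * α₁ * s ^ 2 := by
      field_simp
    linarith
  have hE : (f * g).trace + f.trace * g.trace
        + (4 * cb * κ / s - 2 / s ^ 2) * (f * x * g * x).trace + (B * x).trace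
      ≤ 2 * (α₁ * s) + 4 * cb * κ * α₁ * s ^ 2 + (-β₁ * s ^ 2 + C₁) := by
    linarith [hfgle, hfg, hTterm, hBx]
  have hmul : (cb / s) * ((f * g).trace + f.trace * g.trace
        + (4 * cb * κ / s - 2 / s ^ 2) * (f * x * g * x).trace + (B * x).trace)
      ≤ (cb / s) * (2 * (α₁ * s) + 4 * cb * κ * α₁ * s ^ 2 + (-β₁ * s ^ 2 + C₁)) :=
    mul_le_mul_of_nonneg_left hE (by positivity)
  have hexp : (cb / s) * (2 * (α₁ * s) + 4 * cb * κ * α₁ * s ^ 2 + (-β₁ * s ^ 2 + C₁))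
      = 2 * α₁ * cb + C₁ * cb / s + (4 * κ * α₁ * cb ^ 2 - β₁ * cb) * s := by
    field_simp
    ring
  have hdiv : C₁ * cb / s ≤ C₁ * cb / (n₀ + 2) := by
    apply div_le_div_of_nonneg_left (by positivity) (by linarith) (le_of_lt hxn)
  calc (cb / s) * ((f * g).trace + f.trace * g.trace
        + (4 * cb * κ / s - 2 / s ^ 2) * (f * x * g * x).trace + (B * x).trace)
      ≤ 2 * α₁ * cb + C₁ * cb / s + (4 * κ * α₁ * cb ^ 2 - β₁ * cb) * s := by
        rw [← hexp]; exact hmul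
    _ ≤ 2 * α₁ * cb + C₁ * cb / (n₀ + 2) + (4 * κ * α₁ * cb ^ 2 - β₁ * cb) * s := by
        linarith [hdiv]
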